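/- For all θ with 0 < |θ| ≤ π/3, log²(2(1 - cos θ)) ≤ log²(θ²/2). -/

import Mathlib

open Real

theorem sq_log_two_mul_one_sub_cos_le (θ : ℝ) (h0 : 0 < |θ|) (h1 : |θ| ≤ π/3) :
    (Real.log (2*(1 - Real.cos θ)))^2 ≤ (Real.log (θ^2/2))^2 := by
  have hpi : (3.14 : ℝ) ≤ π := by linarith [Real.pi_gt_d6]
  have hpi' : π ≤ 3.15 := by linarith [Real.pi_lt_d2]
  set t := |θ| with ht
  have hθcos : Real.cos θ = Real.cos t := (Real.cos_abs θ).symm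
  have ht0 : (0:ℝ) < t := h0
  have htle : t ≤ π/3 := h1
  have ht1 : t/2 ≤ 1 := by linarith
  have ht20 : (0:ℝ) < t/2 := by linarith
  have hsin : t/2 - (t/2)^3/4 < Real.sin (t/2) := by
    have := Real.sin_gt_sub_cube ht20
    linarith [pow_pos ht20 3]
  have hsq : Real.sin (t/2)^2 = 1/2 - Real.cos t/2 := by
    have := Real.sin_sq_eq_half_sub (t/2)
    rwa [show 2*(t/2) = t by ring] at this
  have hθsq : θ^2 = t^2 := (sq_abs θ).symm
  have hab : θ^2/2 ≤ 2*(1 - Real.cos θ) := by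
    rw [hθcos, hθsq]
    have htle2 : t/2 ≤ 0.525 := by linarith
    have hu0 : 0 ≤ t/2 - (t/2)^3/4 := by nlinarith [ht20, ht1]
    have hs2 : (t/2 - (t/2)^3/4)^2 ≤ Real.sin (t/2)^2 := by nlinarith [hsin, hu0]
    have hx2 : (t/2)^2 ≤ 0.28 := by nlinarith
    have key : t^2/2 ≤ 4*(t/2 - (t/2)^3/4)^2 := by
      nlinarith [hx2, sq_nonneg (t/2), sq_nonneg ((t/2)^3)]
    linarith [hs2, key, hsq]
  have hb1 : 2*(1 - Real.cos θ) ≤ 1 := by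
    rw [hθcos]
    have hc : Real.cos (π/3) ≤ Real.cos t := by
      apply Real.cos_le_cos_of_nonneg_of_le_pi (le_of_lt ht0) (by linarith) htle
    rw [Real.cos_pi_div_three] at hc
    linarith
  have ha0 : (0:ℝ) < θ^2/2 := by
    rw [hθsq]; positivity
  have hb0 : (0:ℝ) < 2*(1 - Real.cos θ) := by linarith
  have hlog1 : Real.log (θ^2/2) ≤ Real.log (2*(1 - Real.cos θ)) :=
    Real.log_le_log ha0 hab
  have hlog2 : Real.log (2*(1 - Real.cos θ)) ≤ 0 :=
    Real.log_nonpos (le_of_lt hb0) hb1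
  have := sq_le_sq' (by linarith : -(-(Real.log (θ^2/2))) ≤ Real.log (2*(1 - Real.cos θ)))
    (by linarith : Real.log (2*(1 - Real.cos θ)) ≤ -(Real.log (θ^2/2)))
  simpa [neg_sq] using this
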